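/- arXiv:1404.4477 — 3 statements merged into one kernel-verified Lean document; each statement's English description precedes it below -/
import Mathlib

section
/- Let (Ω, F, P) be a probability space, E a separable Banach space, v ≥ 0, and G : Ω → ℝ a random variable whose law is the centered Gaussian measure on ℝ with variance v. Let p > 1, let K : Ω → E be strongly measurable with E‖K‖_E^p < ∞, let q satisfy 1 ≤ q < p, and let T > 0. Then ∫₀^T ( E[ exp(sG − s²v/2) · ‖K‖_E^q ] )^{1/q} ds ≤ ( ∫₀^T exp( s²v / (2(p − q)) ) ds ) · ( E‖K‖_E^p )^{1/p}. -/
open MeasureTheory ProbabilityTheory Real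

lemma gaussianReal_exp_mul_aux (v : NNReal) (t : ℝ) :
    Integrable (fun x => Real.exp (t * x)) (gaussianReal 0 v) ∧
    ∫ x, Real.exp (t * x) ∂(gaussianReal 0 v) = Real.exp ((v : ℝ) * t ^ 2 / 2) := by
  by_cases hv : v = 0
  · subst hv
    rw [gaussianReal_zero_var]
    constructor
    · exact (integrable_congr (ae_eq_dirac (fun x => Real.exp (t * x)))).2
        (integrable_const _)
    · simp [integral_dirac]
  · have hv' : 0 < (v : ℝ) := by positivity
    have key : ∀ x : ℝ, gaussianPDFReal 0 v x * Real.exp (t * x)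
        = Real.exp ((v : ℝ) * t ^ 2 / 2) * gaussianPDFReal ((v : ℝ) * t) v x := by
      intro x
      simp only [gaussianPDFReal_def]
      have hexp : -(x - 0) ^ 2 / (2 * (v : ℝ)) + t * x
          = (v : ℝ) * t ^ 2 / 2 + -(x - (v : ℝ) * t) ^ 2 / (2 * (v : ℝ)) := by
        field_simp
        ring
      rw [mul_assoc, ← Real.exp_add, hexp, Real.exp_add]
      ring
    have hmeas : Measurable fun x => (gaussianPDFReal 0 v x).toNNReal :=
      (measurable_gaussianPDFReal 0 v).real_toNNReal
    have hdens : gaussianReal 0 v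
        = volume.withDensity (fun x => ((gaussianPDFReal 0 v x).toNNReal : ENNReal)) := by
      rw [gaussianReal_of_var_ne_zero _ hv]
      rfl
    have hint2 : Integrable (fun x => gaussianPDFReal 0 v x * Real.exp (t * x)) volume := by
      have : Integrable (fun x => Real.exp ((v : ℝ) * t ^ 2 / 2)
          * gaussianPDFReal ((v : ℝ) * t) v x) volume :=
        (integrable_gaussianPDFReal _ _).const_mul _
      exact this.congr (by filter_upwards with x using (key x).symm)
    constructor
    · rw [hdens, integrable_withDensity_iff_integrable_smul hmeas]
      refine hint2.congr ?_
      filter_upwards with x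
      simp [NNReal.smul_def, Real.coe_toNNReal _ (gaussianPDFReal_nonneg 0 v x)]
    · rw [hdens, integral_withDensity_eq_integral_smul hmeas]
      have : ∀ x : ℝ, (gaussianPDFReal 0 v x).toNNReal • Real.exp (t * x)
          = Real.exp ((v : ℝ) * t ^ 2 / 2) * gaussianPDFReal ((v : ℝ) * t) v x := by
        intro x
        rw [NNReal.smul_def, smul_eq_mul, Real.coe_toNNReal _ (gaussianPDFReal_nonneg 0 v x), key x]
      simp_rw [this]
      rw [integral_const_mul, integral_gaussianPDFReal_eq_one _ hv, mul_one]


lemma gaussian_shift_aestronglyMeasurable_aux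
    {Ω : Type*} [MeasurableSpace Ω] (P : Measure Ω) [IsProbabilityMeasure P]
    {E : Type*} [NormedAddCommGroup E]
    (v : NNReal) (q : ℝ) (G : Ω → ℝ) (hGa : AEMeasurable G P)
    (K : Ω → E) (hKq : Measurable fun ω => ‖K ω‖ ^ q) :
    AEStronglyMeasurable (fun s : ℝ =>
      (∫ ω, Real.exp (s * G ω - s ^ 2 * (v : ℝ) / 2) * ‖K ω‖ ^ q ∂P) ^ (1 / q)) volume := by
  obtain ⟨G', hG'm, hae⟩ := hGa
  have hΦ : StronglyMeasurable fun z : ℝ × Ω =>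
      Real.exp (z.1 * G' z.2 - z.1 ^ 2 * (v : ℝ) / 2) * ‖K z.2‖ ^ q := by
    apply Measurable.stronglyMeasurable
    have hK' : Measurable fun z : ℝ × Ω => ‖K z.2‖ ^ q := hKq.comp measurable_snd
    have h1 : Measurable fun z : ℝ × Ω => z.1 * G' z.2 - z.1 ^ 2 * (v : ℝ) / 2 := by
      fun_prop
    exact (Real.measurable_exp.comp h1).mul hK'
  have hSM : StronglyMeasurable fun s =>
      ∫ ω, Real.exp (s * G' ω - s ^ 2 * (v : ℝ) / 2) * ‖K ω‖ ^ q ∂P :=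
    hΦ.integral_prod_right'
  have hFeq : (fun s : ℝ =>
        (∫ ω, Real.exp (s * G ω - s ^ 2 * (v : ℝ) / 2) * ‖K ω‖ ^ q ∂P) ^ (1 / q))
      = fun s =>
        (∫ ω, Real.exp (s * G' ω - s ^ 2 * (v : ℝ) / 2) * ‖K ω‖ ^ q ∂P) ^ (1 / q) := by
    funext s
    congr 1
    refine integral_congr_ae ?_
    filter_upwards [hae] with ω hω
    rw [hω]
  rw [hFeq]
  have : Measurable fun s =>
      (∫ ω, Real.exp (s * G' ω - s ^ 2 * (v : ℝ) / 2) * ‖K ω‖ ^ q ∂P) ^ (1 / q) := by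
    have := hSM.measurable
    fun_prop
  exact this.aestronglyMeasurable

set_option maxHeartbeats 1000000 in
/-- Lemma 3.6(ii) of the paper, rewritten via the Cameron–Martin change of measure:
for `G` centered Gaussian with variance `v`, a strongly measurable `K : Ω → E` with
`E‖K‖^p < ∞`, `1 ≤ q < p` and `T > 0`,
`∫₀ᵀ (E[exp(sG - s²v/2) ‖K‖^q])^{1/q} ds ≤ (∫₀ᵀ exp(s²v/(2(p-q))) ds) (E‖K‖^p)^{1/p}`. -/
theorem gaussian_shift_moment_integral_estimate
    {Ω : Type*} [MeasurableSpace Ω] (P : Measure Ω) [IsProbabilityMeasure P]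
    {E : Type*} [NormedAddCommGroup E] [NormedSpace ℝ E] [CompleteSpace E]
    [TopologicalSpace.SeparableSpace E]
    (v : NNReal) (G : Ω → ℝ) (hG : P.map G = gaussianReal 0 v)
    (p q : ℝ) (hp : 1 < p) (hq : 1 ≤ q) (hqp : q < p)
    (K : Ω → E) (hKmeas : StronglyMeasurable K)
    (hKp : Integrable (fun ω => ‖K ω‖ ^ p) P)
    (T : ℝ) (hT : 0 < T) :
    (∫ s in (0:ℝ)..T,
        (∫ ω, Real.exp (s * G ω - s ^ 2 * (v : ℝ) / 2) * ‖K ω‖ ^ q ∂P) ^ (1 / q))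
      ≤ (∫ s in (0:ℝ)..T, Real.exp (s ^ 2 * (v : ℝ) / (2 * (p - q))))
        * (∫ ω, ‖K ω‖ ^ p ∂P) ^ (1 / p) := by
  have hq0 : (0 : ℝ) < q := lt_of_lt_of_le one_pos hq
  have hp0 : (0 : ℝ) < p := lt_trans one_pos hp
  have hpq : (0 : ℝ) < p - q := sub_pos.2 hqp
  set r : ℝ := p / (p - q) with hr_def
  have hr1 : 1 < r := (one_lt_div hpq).2 (by linarith)
  have hr0 : 0 < r := lt_trans one_pos hr1
  -- G is a.e.-measurable
  have hGa : AEMeasurable G P := by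
    by_contra h
    have h1 : (gaussianReal 0 v) Set.univ = 1 := measure_univ
    rw [← hG, Measure.map_of_not_aemeasurable h] at h1
    simp at h1
  -- moment generating function of G
  have hmgf : ∀ t : ℝ, Integrable (fun ω => Real.exp (t * G ω)) P ∧
      ∫ ω, Real.exp (t * G ω) ∂P = Real.exp ((v : ℝ) * t ^ 2 / 2) := by
    intro t
    have hmeas : AEStronglyMeasurable (fun x : ℝ => Real.exp (t * x)) (P.map G) :=
      (Real.continuous_exp.comp (continuous_const.mul continuous_id)).aestronglyMeasurable
    constructor
    · have := (integrable_map_measure hmeas hGa).symm.2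
      rw [hG] at this
      exact this (gaussianReal_exp_mul_aux v t).1
    · calc ∫ ω, Real.exp (t * G ω) ∂P = ∫ x, Real.exp (t * x) ∂(P.map G) :=
            (integral_map hGa hmeas).symm
        _ = Real.exp ((v : ℝ) * t ^ 2 / 2) := by
            rw [hG]; exact (gaussianReal_exp_mul_aux v t).2
  set X : ℝ := ∫ ω, ‖K ω‖ ^ p ∂P with hX_def
  have hX0 : 0 ≤ X := integral_nonneg fun ω => Real.rpow_nonneg (norm_nonneg _) p
  have hKq : Measurable fun ω => ‖K ω‖ ^ q := by
    have hKn := hKmeas.norm.measurable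
    fun_prop
  have hconj : r.HolderConjugate (p / q) := by
    rw [Real.holderConjugate_iff]
    constructor
    · exact hr1
    · rw [hr_def, inv_div, inv_div]
      field_simp
      ring
  -- the pointwise (in s) estimate
  have key : ∀ s : ℝ,
      (∫ ω, Real.exp (s * G ω - s ^ 2 * (v : ℝ) / 2) * ‖K ω‖ ^ q ∂P) ^ (1 / q)
        ≤ Real.exp (s ^ 2 * (v : ℝ) / (2 * (p - q))) * X ^ (1 / p) := by
    intro s
    set c : ℝ := s ^ 2 * (v : ℝ) / 2 with hc_def
    have hc0 : 0 ≤ c := by positivity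
    set f : Ω → ℝ := fun ω => Real.exp (s * G ω - c) with hf_def
    set g : Ω → ℝ := fun ω => ‖K ω‖ ^ q with hg_def
    have hf_aesm : AEStronglyMeasurable f P := by
      refine (Real.measurable_exp.comp_aemeasurable ?_).aestronglyMeasurable
      exact (hGa.const_mul s).sub aemeasurable_const
    have hg_aesm : AEStronglyMeasurable g P := by
      rw [hg_def]
      exact hKq.aestronglyMeasurable
    -- ∫ f ^ r
    have hfr_eq : (fun ω => f ω ^ r) = fun ω => Real.exp (-(r * c)) * Real.exp ((r * s) * G ω) := by
      funext ω
      rw [hf_def, ← Real.exp_mul, ← Real.exp_add]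
      ring_nf
    have hf_int : Integrable (fun ω => f ω ^ r) P := by
      rw [hfr_eq]; exact ((hmgf (r * s)).1).const_mul _
    have hfr_val : ∫ ω, f ω ^ r ∂P = Real.exp (r * (r - 1) * c) := by
      rw [hfr_eq, integral_const_mul, (hmgf (r * s)).2, ← Real.exp_add]
      congr 1
      rw [hc_def]
      ring
    have hf_mem : MemLp f (ENNReal.ofReal r) P := by
      have h1 : MemLp (fun ω => ‖f ω‖ ^ (ENNReal.ofReal r).toReal) (ENNReal.ofReal r / ENNReal.ofReal r) P := by
        rw [ENNReal.div_self (by simp [hr0]) ENNReal.ofReal_ne_top]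
        rw [memLp_one_iff_integrable]
        refine hf_int.congr ?_
        filter_upwards with ω
        rw [ENNReal.toReal_ofReal hr0.le, Real.norm_of_nonneg (Real.exp_nonneg _)]
      exact (memLp_norm_rpow_iff hf_aesm (by simp [hr0]) ENNReal.ofReal_ne_top).1 h1
    have hg_pow : (fun ω => g ω ^ (p / q)) = fun ω => ‖K ω‖ ^ p := by
      funext ω
      rw [hg_def, ← Real.rpow_mul (norm_nonneg _)]
      congr 1
      field_simp
    have hg_mem : MemLp g (ENNReal.ofReal (p / q)) P := by
      have hpq0 : (0 : ℝ) < p / q := by positivity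
      have h1 : MemLp (fun ω => ‖g ω‖ ^ (ENNReal.ofReal (p / q)).toReal)
          (ENNReal.ofReal (p / q) / ENNReal.ofReal (p / q)) P := by
        rw [ENNReal.div_self (by simp [hpq0]) ENNReal.ofReal_ne_top]
        rw [memLp_one_iff_integrable]
        have h2 : Integrable (fun ω => g ω ^ (p / q)) P := by rw [hg_pow]; exact hKp
        refine h2.congr ?_
        filter_upwards with ω
        rw [ENNReal.toReal_ofReal hpq0.le,
          Real.norm_of_nonneg (Real.rpow_nonneg (norm_nonneg _) _)]
      exact (memLp_norm_rpow_iff hg_aesm (by simp [hpq0]) ENNReal.ofReal_ne_top).1 h1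
    have hH := integral_mul_le_Lp_mul_Lq_of_nonneg hconj
      (Filter.Eventually.of_forall fun ω => Real.exp_nonneg _)
      (Filter.Eventually.of_forall fun ω => Real.rpow_nonneg (norm_nonneg _) _)
      hf_mem hg_mem
    rw [hfr_val, hg_pow] at hH
    -- hH : ∫ f * g ≤ exp (r*(r-1)*c) ^ (1/r) * X ^ (1/(p/q))
    have hHr : ∫ ω, f ω * g ω ∂P
        ≤ Real.exp ((r - 1) * c) * X ^ (q / p) := by
      refine hH.trans_eq ?_
      rw [← Real.exp_mul]
      congr 1
      · field_simp
      · rw [one_div_div]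
    have hLHS0 : 0 ≤ ∫ ω, f ω * g ω ∂P :=
      integral_nonneg fun ω =>
        mul_nonneg (Real.exp_nonneg _) (Real.rpow_nonneg (norm_nonneg _) _)
    have hfin : (∫ ω, f ω * g ω ∂P) ^ (1 / q)
        ≤ (Real.exp ((r - 1) * c) * X ^ (q / p)) ^ (1 / q) :=
      Real.rpow_le_rpow hLHS0 hHr (by positivity)
    have hrhs_eq : (Real.exp ((r - 1) * c) * X ^ (q / p)) ^ (1 / q)
        = Real.exp (s ^ 2 * (v : ℝ) / (2 * (p - q))) * X ^ (1 / p) := by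
      rw [Real.mul_rpow (Real.exp_nonneg _) (Real.rpow_nonneg hX0 _),
        ← Real.exp_mul, ← Real.rpow_mul hX0]
      congr 1
      · congr 1
        rw [hc_def, hr_def]
        field_simp
        ring
      · congr 1
        field_simp
    calc (∫ ω, Real.exp (s * G ω - s ^ 2 * (v : ℝ) / 2) * ‖K ω‖ ^ q ∂P) ^ (1 / q)
        = (∫ ω, f ω * g ω ∂P) ^ (1 / q) := rfl
      _ ≤ (Real.exp ((r - 1) * c) * X ^ (q / p)) ^ (1 / q) := hfin
      _ = Real.exp (s ^ 2 * (v : ℝ) / (2 * (p - q))) * X ^ (1 / p) := hrhs_eq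
  -- measurability in s of the parametrized integral
  set F : ℝ → ℝ := fun s =>
    (∫ ω, Real.exp (s * G ω - s ^ 2 * (v : ℝ) / 2) * ‖K ω‖ ^ q ∂P) ^ (1 / q) with hF_def
  have hF_meas : AEStronglyMeasurable F volume :=
    gaussian_shift_aestronglyMeasurable_aux P v q G hGa K hKq
  have hcont : Continuous fun s : ℝ =>
      Real.exp (s ^ 2 * (v : ℝ) / (2 * (p - q))) * X ^ (1 / p) := by
    fun_prop
  have hRint : IntervalIntegrable
      (fun s => Real.exp (s ^ 2 * (v : ℝ) / (2 * (p - q))) * X ^ (1 / p)) volume 0 T :=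
    hcont.intervalIntegrable _ _
  have hF0 : ∀ s, 0 ≤ F s := fun s =>
    Real.rpow_nonneg (integral_nonneg fun ω =>
      mul_nonneg (Real.exp_nonneg _) (Real.rpow_nonneg (norm_nonneg _) _)) _
  have hFint : IntervalIntegrable F volume 0 T := by
    rw [intervalIntegrable_iff_integrableOn_Ioc_of_le hT.le]
    have hR : IntegrableOn
        (fun s => Real.exp (s ^ 2 * (v : ℝ) / (2 * (p - q))) * X ^ (1 / p))
        (Set.Ioc 0 T) volume := hcont.integrableOn_Ioc
    refine hR.mono' (hF_meas.restrict) ?_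
    filter_upwards with s
    rw [Real.norm_of_nonneg (hF0 s)]
    exact key s
  calc ∫ s in (0:ℝ)..T, F s
      ≤ ∫ s in (0:ℝ)..T, Real.exp (s ^ 2 * (v : ℝ) / (2 * (p - q))) * X ^ (1 / p) :=
        intervalIntegral.integral_mono_on hT.le hFint hRint fun s _ => key s
    _ = (∫ s in (0:ℝ)..T, Real.exp (s ^ 2 * (v : ℝ) / (2 * (p - q)))) * X ^ (1 / p) := by
        rw [intervalIntegral.integral_mul_const]
end

section
/- Let T > 0 and let ν be a finite measure on ℝ with ν({0}) = 0 and c := ν(ℝ) > 0. Let D := ([0,T] → ℝ) be equipped with the product (coordinate-projection) σ-algebra, and let m denote the measure (Lebesgue measure on [0,T]) ⊗ ν on [0,T] × ℝ, with normalization m̄ := m/(T·c) a probability measure. For k ≥ 0 define the measurable map S_k : ([0,T] × ℝ)^k → D by S_k((t_1,x_1),…,(t_k,x_k)) := (t ↦ Σ_{i=1}^k x_i · 1_{[t_i,T]}(t)) (with S_0 the zero path), and define the compound Poisson path law P_X := Σ_{k=0}^∞ e^{−cT} (cT)^k / k! · (S_k)_*(m̄^{⊗k}), a probability measure on D. Then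 for every measurable set Λ ⊆ D with P_X(Λ) = 0 one has (P_X ⊗ m)( { (x,(r,v)) ∈ D × ([0,T] × ℝ) : x + v·1_{[r,T]} ∈ Λ } ) = 0. -/
open MeasureTheory

/-- The measure `m = (Lebesgue on [0,T]) ⊗ ν` on `[0,T] × ℝ`. -/
noncomputable def jumpMeasure (T : ℝ) (ν : Measure ℝ) : Measure (ℝ × ℝ) :=
  (volume.restrict (Set.Icc 0 T)).prod ν

/-- The normalized measure `m̄ = m / (T·c)`. -/
noncomputable def jumpMeasureBar (T c : ℝ) (ν : Measure ℝ) : Measure (ℝ × ℝ) :=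
  (ENNReal.ofReal (T * c))⁻¹ • jumpMeasure T ν

/-- The map sending `k` jump times/sizes `(t_i, x_i)` to the piecewise constant path
`t ↦ Σ_i x_i · 1_{[t_i, T]}(t)` on `[0,T]`. -/
noncomputable def jumpPath (T : ℝ) (k : ℕ) (jumps : Fin k → ℝ × ℝ) : Set.Icc (0:ℝ) T → ℝ :=
  fun t => ∑ i, if (jumps i).1 ≤ (t : ℝ) then (jumps i).2 else 0

/-- The compound Poisson path law `P_X = Σ_k e^{-cT} (cT)^k / k! · (S_k)_*(m̄^{⊗k})`
on the path space `[0,T] → ℝ` with the product σ-algebra. -/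
noncomputable def compoundPoissonLaw (T c : ℝ) (ν : Measure ℝ) :
    Measure (Set.Icc (0:ℝ) T → ℝ) :=
  Measure.sum fun k =>
    ENNReal.ofReal (Real.exp (-(c * T)) * (c * T) ^ k / (Nat.factorial k)) •
      Measure.map (jumpPath T k) (Measure.pi fun _ : Fin k => jumpMeasureBar T c ν)

lemma measurable_jumpTerm (t : ℝ) :
    Measurable (fun p : ℝ × ℝ => if p.1 ≤ t then p.2 else 0) :=
  Measurable.ite (measurableSet_le measurable_fst measurable_const) measurable_snd
    measurable_const

lemma measurable_jumpPath (T : ℝ) (k : ℕ) : Measurable (jumpPath T k) :=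
  measurable_pi_lambda _ fun t =>
    Finset.measurable_sum _ fun i _ => (measurable_jumpTerm t).comp (measurable_pi_apply i)

lemma smul_prod_aux {α β : Type*} [MeasurableSpace α] [MeasurableSpace β]
    (c : ENNReal) (μ : Measure α) (ν : Measure β) [SFinite ν] :
    (c • μ).prod ν = c • (μ.prod ν) := by
  ext s hs
  rw [Measure.prod_apply hs, Measure.smul_apply, Measure.prod_apply hs,
    lintegral_smul_measure, smul_eq_mul]

lemma prod_smul_aux {α β : Type*} [MeasurableSpace α] [MeasurableSpace β]
    (c : ENNReal) (hc : c ≠ ⊤) (μ : Measure α) (ν : Measure β) [SFinite ν] :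
    μ.prod (c • ν) = c • (μ.prod ν) := by
  ext s hs
  simp only [Measure.smul_apply, smul_eq_mul]
  rw [Measure.prod_apply hs, Measure.prod_apply hs, ← lintegral_const_mul' _ _ hc]
  simp only [Measure.smul_apply, smul_eq_mul]

/-- Step 2 of the proof of Lemma 3.3 of the paper: if `Λ` is a null set for the
compound Poisson path law `P_X`, then `P_X ⊗ m`-almost every perturbation
`x + v·1_{[r,T]}` of a path `x` by one extra jump still avoids `Λ`. -/
theorem compoundPoisson_jump_perturbation_null
    (T : ℝ) (hT : 0 < T) (ν : Measure ℝ) [IsFiniteMeasure ν] (hν0 : ν {0} = 0)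
    (c : ℝ) (hc : 0 < c) (hνc : ν Set.univ = ENNReal.ofReal c)
    (Λ : Set (Set.Icc (0:ℝ) T → ℝ)) (hΛ : MeasurableSet Λ)
    (hΛ0 : compoundPoissonLaw T c ν Λ = 0) :
    ((compoundPoissonLaw T c ν).prod (jumpMeasure T ν))
      {p : (Set.Icc (0:ℝ) T → ℝ) × (ℝ × ℝ) |
        (fun t => p.1 t + if p.2.1 ≤ (t : ℝ) then p.2.2 else 0) ∈ Λ} = 0 := by
  -- basic finiteness facts
  haveI hfr : IsFiniteMeasure ((volume : Measure ℝ).restrict (Set.Icc 0 T)) := by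
    constructor
    rw [Measure.restrict_apply_univ, Real.volume_Icc]
    exact ENNReal.ofReal_lt_top
  haveI hfm : IsFiniteMeasure (jumpMeasure T ν) := by
    rw [jumpMeasure]; infer_instance
  have hTc0 : ENNReal.ofReal (T * c) ≠ 0 :=
    (ENNReal.ofReal_pos.2 (mul_pos hT hc)).ne'
  have hTct : ENNReal.ofReal (T * c) ≠ ⊤ := ENNReal.ofReal_ne_top
  haveI hfmb : IsFiniteMeasure (jumpMeasureBar T c ν) := by
    constructor
    rw [jumpMeasureBar, Measure.smul_apply, smul_eq_mul]
    exact ENNReal.mul_lt_top (ENNReal.inv_lt_top.2 (pos_iff_ne_zero.2 hTc0)) (measure_lt_top _ _)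
  have hm : jumpMeasure T ν = ENNReal.ofReal (T * c) • jumpMeasureBar T c ν := by
    rw [jumpMeasureBar, smul_smul, ENNReal.mul_inv_cancel hTc0 hTct, one_smul]
  -- measurability of the perturbation map
  have hF : Measurable (fun p : (Set.Icc (0:ℝ) T → ℝ) × (ℝ × ℝ) =>
      fun t : Set.Icc (0:ℝ) T => p.1 t + if p.2.1 ≤ (t : ℝ) then p.2.2 else 0) :=
    measurable_pi_lambda _ fun t =>
      (((measurable_pi_apply t).comp measurable_fst).add
        ((measurable_jumpTerm t).comp measurable_snd))
  have hE : MeasurableSet {p : (Set.Icc (0:ℝ) T → ℝ) × (ℝ × ℝ) |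
      (fun t => p.1 t + if p.2.1 ≤ (t : ℝ) then p.2.2 else 0) ∈ Λ} := hF hΛ
  -- each summand of the compound Poisson law gives Λ measure zero
  have hmapnull : ∀ k, Measure.map (jumpPath T k)
      (Measure.pi fun _ : Fin k => jumpMeasureBar T c ν) Λ = 0 := by
    intro k
    rw [compoundPoissonLaw, Measure.sum_apply _ hΛ] at hΛ0
    have h := (ENNReal.tsum_eq_zero.1 hΛ0) k
    rw [Measure.smul_apply, smul_eq_mul, mul_eq_zero] at h
    rcases h with h | h
    · exact absurd h (ENNReal.ofReal_pos.2 (by positivity)).ne'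
    · exact h
  -- expand the product measure as a sum
  rw [compoundPoissonLaw, Measure.prod_sum_left, Measure.sum_apply _ hE]
  refine ENNReal.tsum_eq_zero.2 fun k => ?_
  rw [smul_prod_aux, Measure.smul_apply, smul_eq_mul]
  -- it suffices to kill each term
  suffices h : ((Measure.map (jumpPath T k)
      (Measure.pi fun _ : Fin k => jumpMeasureBar T c ν)).prod (jumpMeasure T ν))
      {p : (Set.Icc (0:ℝ) T → ℝ) × (ℝ × ℝ) |
        (fun t => p.1 t + if p.2.1 ≤ (t : ℝ) then p.2.2 else 0) ∈ Λ} = 0 by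
    rw [h, mul_zero]
  set μk := Measure.pi fun _ : Fin k => jumpMeasureBar T c ν with hμk
  have hmain : (Measure.map (jumpPath T k) μk).prod (jumpMeasure T ν) =
      Measure.map (Prod.map (jumpPath T k) id) (μk.prod (jumpMeasure T ν)) := by
    rw [← Measure.map_prod_map _ _ (measurable_jumpPath T k) measurable_id, Measure.map_id]
  rw [hmain, Measure.map_apply ((measurable_jumpPath T k).prodMap measurable_id) hE]
  -- the preimage is the set of (jumps, new jump) whose combined path lies in Λ
  have hpre : (Prod.map (jumpPath T k) id) ⁻¹' {p : (Set.Icc (0:ℝ) T → ℝ) × (ℝ × ℝ) |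
        (fun t => p.1 t + if p.2.1 ≤ (t : ℝ) then p.2.2 else 0) ∈ Λ} =
      (fun q : (Fin k → ℝ × ℝ) × (ℝ × ℝ) =>
        (fun t : Set.Icc (0:ℝ) T =>
          jumpPath T k q.1 t + if q.2.1 ≤ (t : ℝ) then q.2.2 else 0)) ⁻¹' Λ := rfl
  rw [hpre]
  set G : (Fin k → ℝ × ℝ) × (ℝ × ℝ) → (Set.Icc (0:ℝ) T → ℝ) := fun q =>
    fun t : Set.Icc (0:ℝ) T =>
      jumpPath T k q.1 t + if q.2.1 ≤ (t : ℝ) then q.2.2 else 0 with hG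
  have hGmeas : Measurable G :=
    measurable_pi_lambda _ fun t =>
      (((measurable_pi_apply t).comp ((measurable_jumpPath T k).comp measurable_fst)).add
        ((measurable_jumpTerm t).comp measurable_snd))
  rw [hm, prod_smul_aux _ hTct, Measure.smul_apply, smul_eq_mul]
  -- identify μk.prod m̄ with the (k+1)-fold product via piFinSuccAbove and swap
  have mp1 := measurePreserving_piFinSuccAbove
    (fun _ : Fin (k + 1) => jumpMeasureBar T c ν) (Fin.last k)
  have mp2 : MeasurePreserving Prod.swap
      ((jumpMeasureBar T c ν).prod μk) (μk.prod (jumpMeasureBar T c ν)) :=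
    Measure.measurePreserving_swap
  have mp3 := mp2.comp mp1
  have hpre2 := mp3.measure_preimage (s := G ⁻¹' Λ) (hGmeas hΛ).nullMeasurableSet
  have hcomp : (Prod.swap ∘ (MeasurableEquiv.piFinSuccAbove
      (fun _ : Fin (k + 1) => ℝ × ℝ) (Fin.last k))) ⁻¹' (G ⁻¹' Λ) =
      jumpPath T (k + 1) ⁻¹' Λ := by
    ext f
    simp only [Set.mem_preimage, Function.comp_apply]
    have : G (Prod.swap (MeasurableEquiv.piFinSuccAbove
        (fun _ : Fin (k + 1) => ℝ × ℝ) (Fin.last k) f)) = jumpPath T (k + 1) f := by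
      funext t
      simp only [hG, MeasurableEquiv.piFinSuccAbove, MeasurableEquiv.coe_mk,
        Equiv.coe_fn_mk, Prod.swap, jumpPath]
      rw [Fin.sum_univ_castSucc]
      simp [Fin.succAbove_last, Fin.init]
    rw [this]
  rw [hcomp] at hpre2
  rw [← hpre2, ← Measure.map_apply (measurable_jumpPath T (k + 1)) hΛ, hmapnull (k + 1),
    mul_zero]
end

section
/- Let T > 0 and let ν be a σ-finite measure on ℝ, and set μ := (Lebesgue measure on [0,T]) ⊗ ν on [0,T] × ℝ. Let D := ([0,T] → ℝ) be equipped with the product (coordinate-projection) σ-algebra and pointwise addition, and define the measurable jump-perturbation map Φ : D × ([0,T] × ℝ) → D by Φ(x,(r,v)) := x + v·1_{[r,T]}. Suppose Q is a probability measure on D such that for every measurable Λ ⊆ D with Q(Λ) = 0 one has (Q ⊗ μ)(Φ^{-1}(Λ)) = 0. Then for every probability measure R on D, the convolution R ∗ Q (the image of R ⊗ Q under pointwise addition of paths) has the same property: for every measurable Λ ⊆ D with (R ∗ Q)(Λ) = 0 one has ((R ∗ Q) ⊗ μ)(Φ^{-1}(Λ)) = 0. -/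
open MeasureTheory

/-- Step 1 of the proof of Lemma 3.3 of the paper, in abstract form: on the path space
`D = ([0,T] → ℝ)` with the product σ-algebra and pointwise addition, let
`μ = (Lebesgue on [0,T]) ⊗ ν` and let `Φ(x,(r,v)) = x + v·1_{[r,T]}` be the
jump-perturbation map. If a probability path law `Q` has the property that
`Q`-null sets are `(Q ⊗ μ)`-null for `Φ`, then so does the convolution `R ∗ Q`
(the image of `R ⊗ Q` under pointwise addition) for any probability path law `R`. -/
theorem jump_perturbation_null_stable_under_convolution
    (T : ℝ) (hT : 0 < T) (ν : Measure ℝ) [SigmaFinite ν]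
    (Q R : Measure (Set.Icc (0:ℝ) T → ℝ))
    [IsProbabilityMeasure Q] [IsProbabilityMeasure R]
    (hQ : ∀ Λ : Set (Set.Icc (0:ℝ) T → ℝ), MeasurableSet Λ → Q Λ = 0 →
      (Q.prod ((volume.restrict (Set.Icc 0 T)).prod ν))
        {p : (Set.Icc (0:ℝ) T → ℝ) × (ℝ × ℝ) |
          (fun t => p.1 t + if p.2.1 ≤ (t : ℝ) then p.2.2 else 0) ∈ Λ} = 0) :
    ∀ Λ : Set (Set.Icc (0:ℝ) T → ℝ), MeasurableSet Λ →
      Measure.map (fun q => q.1 + q.2) (R.prod Q) Λ = 0 →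
      ((Measure.map (fun q => q.1 + q.2) (R.prod Q)).prod
          ((volume.restrict (Set.Icc 0 T)).prod ν))
        {p : (Set.Icc (0:ℝ) T → ℝ) × (ℝ × ℝ) |
          (fun t => p.1 t + if p.2.1 ≤ (t : ℝ) then p.2.2 else 0) ∈ Λ} = 0 := by
  intro Λ hΛ hΛ0
  have hadd : Measurable (fun q : (Set.Icc (0:ℝ) T → ℝ) × (Set.Icc (0:ℝ) T → ℝ) =>
      q.1 + q.2) := by
    apply measurable_pi_lambda
    intro t
    exact ((measurable_pi_apply t).comp measurable_fst).add
      ((measurable_pi_apply t).comp measurable_snd)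
  have hΦ : Measurable (fun p : (Set.Icc (0:ℝ) T → ℝ) × (ℝ × ℝ) =>
      (fun t => p.1 t + if p.2.1 ≤ (t : ℝ) then p.2.2 else 0 : Set.Icc (0:ℝ) T → ℝ)) := by
    apply measurable_pi_lambda
    intro t
    refine ((measurable_pi_apply t).comp measurable_fst).add ?_
    refine Measurable.ite ?_ (measurable_snd.comp measurable_snd) measurable_const
    exact measurableSet_le (measurable_fst.comp measurable_snd) measurable_const
  have hS : MeasurableSet {p : (Set.Icc (0:ℝ) T → ℝ) × (ℝ × ℝ) |
      (fun t => p.1 t + if p.2.1 ≤ (t : ℝ) then p.2.2 else 0) ∈ Λ} := hΦ hΛ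
  -- a.e. h, Q {x | h + x ∈ Λ} = 0
  rw [Measure.map_apply hadd hΛ, Measure.prod_apply (hadd hΛ)] at hΛ0
  have hmeas1 : Measurable (fun h : Set.Icc (0:ℝ) T → ℝ =>
      Q (Prod.mk h ⁻¹' ((fun q : (Set.Icc (0:ℝ) T → ℝ) × (Set.Icc (0:ℝ) T → ℝ) =>
        q.1 + q.2) ⁻¹' Λ))) :=
    measurable_measure_prodMk_left (hadd hΛ)
  have hae : ∀ᵐ h ∂ R,
      Q (Prod.mk h ⁻¹' ((fun q : (Set.Icc (0:ℝ) T → ℝ) × (Set.Icc (0:ℝ) T → ℝ) =>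
        q.1 + q.2) ⁻¹' Λ)) = 0 :=
    (lintegral_eq_zero_iff hmeas1).mp hΛ0
  rw [Measure.prod_apply hS,
    lintegral_map (measurable_measure_prodMk_left hS) hadd]
  have hm2 : Measurable (fun a : (Set.Icc (0:ℝ) T → ℝ) × (Set.Icc (0:ℝ) T → ℝ) =>
      ((volume.restrict (Set.Icc (0:ℝ) T)).prod ν) (Prod.mk (a.1 + a.2) ⁻¹'
      {p : (Set.Icc (0:ℝ) T → ℝ) × (ℝ × ℝ) |
        (fun t => p.1 t + if p.2.1 ≤ (t : ℝ) then p.2.2 else 0) ∈ Λ})) :=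
    (measurable_measure_prodMk_left hS).comp hadd
  rw [lintegral_prod _ hm2.aemeasurable]
  have hzero : ∀ᵐ h ∂ R, (∫⁻ x, ((volume.restrict (Set.Icc (0:ℝ) T)).prod ν)
      (Prod.mk ((h, x).1 + (h, x).2) ⁻¹'
      {p : (Set.Icc (0:ℝ) T → ℝ) × (ℝ × ℝ) |
        (fun t => p.1 t + if p.2.1 ≤ (t : ℝ) then p.2.2 else 0) ∈ Λ}) ∂Q) = 0 := by
    filter_upwards [hae] with h hh
    set Λh : Set (Set.Icc (0:ℝ) T → ℝ) :=
      Prod.mk h ⁻¹' ((fun q : (Set.Icc (0:ℝ) T → ℝ) × (Set.Icc (0:ℝ) T → ℝ) =>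
        q.1 + q.2) ⁻¹' Λ) with hΛh
    have hΛhm : MeasurableSet Λh := (measurable_prodMk_left (hadd hΛ))
    have key := hQ Λh hΛhm hh
    have hSh : MeasurableSet {p : (Set.Icc (0:ℝ) T → ℝ) × (ℝ × ℝ) |
        (fun t => p.1 t + if p.2.1 ≤ (t : ℝ) then p.2.2 else 0) ∈ Λh} := hΦ hΛhm
    rw [Measure.prod_apply hSh] at key
    have heq : ∀ x : Set.Icc (0:ℝ) T → ℝ, Prod.mk (h + x) ⁻¹'
        {p : (Set.Icc (0:ℝ) T → ℝ) × (ℝ × ℝ) |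
          (fun t => p.1 t + if p.2.1 ≤ (t : ℝ) then p.2.2 else 0) ∈ Λ} =
        Prod.mk x ⁻¹'
        {p : (Set.Icc (0:ℝ) T → ℝ) × (ℝ × ℝ) |
          (fun t => p.1 t + if p.2.1 ≤ (t : ℝ) then p.2.2 else 0) ∈ Λh} := by
      intro x
      ext rv
      have hfun : (fun t => (h + x) t + if rv.1 ≤ (t : ℝ) then rv.2 else 0) =
          h + (fun t => x t + if rv.1 ≤ (t : ℝ) then rv.2 else 0) := by
        funext t
        simp [Pi.add_apply, add_assoc]
      simp only [Set.mem_preimage, Set.mem_setOf_eq, hΛh, hfun]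
    calc ∫⁻ x, ((volume.restrict (Set.Icc (0:ℝ) T)).prod ν) (Prod.mk (h + x) ⁻¹'
          {p : (Set.Icc (0:ℝ) T → ℝ) × (ℝ × ℝ) |
            (fun t => p.1 t + if p.2.1 ≤ (t : ℝ) then p.2.2 else 0) ∈ Λ}) ∂Q
        = ∫⁻ x, ((volume.restrict (Set.Icc (0:ℝ) T)).prod ν) (Prod.mk x ⁻¹'
          {p : (Set.Icc (0:ℝ) T → ℝ) × (ℝ × ℝ) |
            (fun t => p.1 t + if p.2.1 ≤ (t : ℝ) then p.2.2 else 0) ∈ Λh}) ∂Q := by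
          simp_rw [heq]
      _ = 0 := key
  calc (∫⁻ h, ∫⁻ x, ((volume.restrict (Set.Icc (0:ℝ) T)).prod ν)
        (Prod.mk ((h, x).1 + (h, x).2) ⁻¹'
        {p : (Set.Icc (0:ℝ) T → ℝ) × (ℝ × ℝ) |
          (fun t => p.1 t + if p.2.1 ≤ (t : ℝ) then p.2.2 else 0) ∈ Λ}) ∂Q ∂ R)
      = ∫⁻ _, (0:ENNReal) ∂ R := lintegral_congr_ae hzero
    _ = 0 := lintegral_zero
end
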